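/- (Single two-county nation, arbitrary rank.) Let p, q ≥ 1, N = p + q, and α, β ∈ ℂ with α ≠ 0, β ≠ 0, α + β ≠ 0. Call an index i : Fin N 'top' if i.val < p and 'bottom' otherwise; note every bottom index is larger than every top index. Define width-2 rank-N matrices R and S as follows (all entries not listed are 0). For x, y : Fin N: if x and y are both top, R (x,y) (x,y) = α and S (x,y) (x,y) = 1; if x and y are both bottom, R (x,y) (x,y) = β and S (x,y) (x,y) = -1; if x is bottom and y is top, R (x,y) (x,y) = α + β, R (x,y) (y,x) = α and S (x,y) (y,x) = 1; if x is top and y is bottom, R (x,y) (x,y) = 0, R (x,y) (y,x) = -β and S (x,y) (y,x) = 1. Then the pair (S,R) satisfies the loop braid relations. -/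
import Mathlib


open Matrix

noncomputable section

/-- The width-3 matrix `M₁ = M ⊗ 1`. -/
def Lone {N : ℕ} (M : Matrix (Fin N × Fin N) (Fin N × Fin N) ℂ) :
    Matrix (Fin N × Fin N × Fin N) (Fin N × Fin N × Fin N) ℂ :=
  Matrix.of fun p q =>
    M (p.1, p.2.1) (q.1, q.2.1) * (if p.2.2 = q.2.2 then (1 : ℂ) else 0)

/-- The width-3 matrix `M₂ = 1 ⊗ M`. -/
def Ltwo {N : ℕ} (M : Matrix (Fin N × Fin N) (Fin N × Fin N) ℂ) :
    Matrix (Fin N × Fin N × Fin N) (Fin N × Fin N × Fin N) ℂ :=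
  Matrix.of fun p q =>
    (if p.1 = q.1 then (1 : ℂ) else 0) * M (p.2.1, p.2.2) (q.2.1, q.2.2)

/-- The pair (S,R) satisfies the loop braid relations. -/
def LoopBraid {N : ℕ} (S R : Matrix (Fin N × Fin N) (Fin N × Fin N) ℂ) : Prop :=
  S * S = 1 ∧
  Lone S * Ltwo S * Lone S = Ltwo S * Lone S * Ltwo S ∧
  Lone R * Ltwo R * Lone R = Ltwo R * Lone R * Ltwo R ∧
  Lone R * Ltwo R * Lone S = Ltwo S * Lone R * Ltwo R ∧
  Lone R * Ltwo S * Lone S = Ltwo S * Lone S * Ltwo R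

/-- A width-2 rank-N matrix is charge-conserving. -/
def ChargeConserving {N : ℕ} (M : Matrix (Fin N × Fin N) (Fin N × Fin N) ℂ) : Prop :=
  ∀ k l i j : Fin N, M (k, l) (i, j) ≠ 0 → ((k, l) = (i, j) ∨ (k, l) = (j, i))

/-! ### Auxiliary machinery -/

set_option maxRecDepth 10000

/-- A coefficient function depending only on whether each index is "top" (`< p`). -/
def dd (p : ℕ) (tt tb bt bb : ℂ) {N : ℕ} (x y : Fin N) : ℂ :=
  if (x : ℕ) < p then (if (y : ℕ) < p then tt else tb)
  else (if (y : ℕ) < p then bt else bb)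

/-- A generic "diagonal + swap" charge-conserving width-2 matrix. -/
def Two {N : ℕ} (d s : Fin N → Fin N → ℂ) :
    Matrix (Fin N × Fin N) (Fin N × Fin N) ℂ :=
  Matrix.of fun P Q =>
    d P.1 P.2 * (if Q = P then 1 else 0) + s P.1 P.2 * (if Q = (P.2, P.1) then 1 else 0)

lemma one_apply_symm {I : Type*} [DecidableEq I] (i j : I) :
    (1 : Matrix I I ℂ) i j = if j = i then 1 else 0 := by
  simp [Matrix.one_apply, eq_comm]

lemma key {I : Type*} [Fintype I] [DecidableEq I] (c₁ c₂ : ℂ) (i₁ i₂ : I)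
    (f : I → ℂ) :
    ∑ W, (c₁ * (if W = i₁ then (1:ℂ) else 0) + c₂ * (if W = i₂ then (1:ℂ) else 0)) * f W
      = c₁ * f i₁ + c₂ * f i₂ := by
  simp [add_mul, mul_ite, ite_mul, Finset.sum_add_distrib]

lemma Lone_Two_apply {N : ℕ} (d s : Fin N → Fin N → ℂ) (a b c : Fin N)
    (Q : Fin N × Fin N × Fin N) :
    Lone (Two d s) (a, b, c) Q
      = d a b * (if Q = (a, b, c) then 1 else 0)
        + s a b * (if Q = (b, a, c) then 1 else 0) := by
  obtain ⟨x, y, z⟩ := Q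
  simp only [Lone, Two, Matrix.of_apply, Prod.mk.injEq]
  by_cases hz : c = z
  · subst hz; simp
  · have hz' : ¬ z = c := fun h => hz h.symm
    simp [hz, hz']

lemma Ltwo_Two_apply {N : ℕ} (d s : Fin N → Fin N → ℂ) (a b c : Fin N)
    (Q : Fin N × Fin N × Fin N) :
    Ltwo (Two d s) (a, b, c) Q
      = d b c * (if Q = (a, b, c) then 1 else 0)
        + s b c * (if Q = (a, c, b) then 1 else 0) := by
  obtain ⟨x, y, z⟩ := Q
  simp only [Ltwo, Two, Matrix.of_apply, Prod.mk.injEq]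
  by_cases hx : a = x
  · subst hx; simp
  · have hx' : ¬ x = a := fun h => hx h.symm
    simp [hx, hx']

lemma LoneTwo_mul {N : ℕ} (d s : Fin N → Fin N → ℂ)
    (X : Matrix (Fin N × Fin N × Fin N) (Fin N × Fin N × Fin N) ℂ)
    (a b c : Fin N) (Q : Fin N × Fin N × Fin N) :
    (Lone (Two d s) * X) (a, b, c) Q
      = d a b * X (a, b, c) Q + s a b * X (b, a, c) Q := by
  rw [Matrix.mul_apply]
  calc ∑ W, Lone (Two d s) (a,b,c) W * X W Q
      = ∑ W, (d a b * (if W = ((a,b,c) : Fin N × Fin N × Fin N) then (1:ℂ) else 0)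
            + s a b * (if W = ((b,a,c) : Fin N × Fin N × Fin N) then (1:ℂ) else 0)) * X W Q := by
        refine Finset.sum_congr rfl fun W _ => ?_
        rw [Lone_Two_apply]
    _ = _ := key _ _ _ _ _

lemma LtwoTwo_mul {N : ℕ} (d s : Fin N → Fin N → ℂ)
    (X : Matrix (Fin N × Fin N × Fin N) (Fin N × Fin N × Fin N) ℂ)
    (a b c : Fin N) (Q : Fin N × Fin N × Fin N) :
    (Ltwo (Two d s) * X) (a, b, c) Q
      = d b c * X (a, b, c) Q + s b c * X (a, c, b) Q := by
  rw [Matrix.mul_apply]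
  calc ∑ W, Ltwo (Two d s) (a,b,c) W * X W Q
      = ∑ W, (d b c * (if W = ((a,b,c) : Fin N × Fin N × Fin N) then (1:ℂ) else 0)
            + s b c * (if W = ((a,c,b) : Fin N × Fin N × Fin N) then (1:ℂ) else 0)) * X W Q := by
        refine Finset.sum_congr rfl fun W _ => ?_
        rw [Ltwo_Two_apply]
    _ = _ := key _ _ _ _ _

lemma Two_mul_apply {N : ℕ} (d s : Fin N → Fin N → ℂ)
    (X : Matrix (Fin N × Fin N) (Fin N × Fin N) ℂ) (a b : Fin N) (Q : Fin N × Fin N) :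
    (Two d s * X) (a, b) Q = d a b * X (a, b) Q + s a b * X (b, a) Q := by
  rw [Matrix.mul_apply]
  calc ∑ W, Two d s (a,b) W * X W Q
      = ∑ W, (d a b * (if W = ((a,b) : Fin N × Fin N) then (1:ℂ) else 0)
            + s a b * (if W = ((b,a) : Fin N × Fin N) then (1:ℂ) else 0)) * X W Q := rfl
    _ = _ := key _ _ _ _ _

theorem stmt16 (p q : ℕ) (hp : 1 ≤ p) (hq : 1 ≤ q)
    (α β : ℂ) (hα : α ≠ 0) (hβ : β ≠ 0) (hab : α + β ≠ 0)
    (R S : Matrix (Fin (p + q) × Fin (p + q)) (Fin (p + q) × Fin (p + q)) ℂ)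
    (hR : R = Matrix.of fun P Q =>
      if P.1.val < p ∧ P.2.val < p then (if Q = P then α else 0)
      else if ¬ P.1.val < p ∧ ¬ P.2.val < p then (if Q = P then β else 0)
      else if ¬ P.1.val < p ∧ P.2.val < p then
        (if Q = P then α + β else if Q = (P.2, P.1) then α else 0)
      else (if Q = (P.2, P.1) then -β else 0))
    (hS : S = Matrix.of fun P Q =>
      if P.1.val < p ∧ P.2.val < p then (if Q = P then 1 else 0)
      else if ¬ P.1.val < p ∧ ¬ P.2.val < p then (if Q = P then -1 else 0)
      else (if Q = (P.2, P.1) then 1 else 0)) :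
    LoopBraid S R := by
  have hR2 : R = Two (dd p α 0 (α+β) β) (dd p 0 (-β) α 0) := by
    subst hR
    ext ⟨x, y⟩ ⟨u, v⟩
    simp only [Two, Matrix.of_apply, dd, Prod.mk.injEq]
    by_cases hx : (x : ℕ) < p <;> by_cases hy : (y : ℕ) < p <;>
      simp only [hx, hy, if_true, if_false, not_true, not_false_iff, true_and, false_and,
        and_true, and_false, and_self] <;>
      split_ifs <;> try ring
    all_goals
      exfalso
      obtain ⟨a1, a2⟩ := ‹u = x ∧ v = y›
      obtain ⟨a3, a4⟩ := ‹u = y ∧ v = x›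
      have hxy : (x : ℕ) = (y : ℕ) := congrArg Fin.val (a1.symm.trans a3)
      omega
  have hS2 : S = Two (dd p 1 0 0 (-1)) (dd p 0 1 1 0) := by
    subst hS
    ext ⟨x, y⟩ ⟨u, v⟩
    simp only [Two, Matrix.of_apply, dd, Prod.mk.injEq]
    by_cases hx : (x : ℕ) < p <;> by_cases hy : (y : ℕ) < p <;>
      simp only [hx, hy, if_true, if_false, not_true, not_false_iff, true_and, false_and,
        and_true, and_false, and_self] <;>
      split_ifs <;> try ring
    all_goals
      exfalso
      obtain ⟨a1, a2⟩ := ‹u = x ∧ v = y›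
      obtain ⟨a3, a4⟩ := ‹u = y ∧ v = x›
      have hxy : (x : ℕ) = (y : ℕ) := congrArg Fin.val (a1.symm.trans a3)
      omega
  rw [hR2, hS2]
  refine ⟨?_, ?_, ?_, ?_, ?_⟩
  · -- S * S = 1
    ext ⟨a, b⟩ ⟨u, v⟩
    rw [Two_mul_apply, one_apply_symm]
    simp only [Two, Matrix.of_apply, dd, Prod.mk.injEq]
    by_cases ha : (a : ℕ) < p <;> by_cases hb : (b : ℕ) < p <;>
      simp only [ha, hb, if_true, if_false] <;>
      split_ifs <;> try ring
    all_goals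
      exfalso
      obtain ⟨a1, a2⟩ := ‹u = a ∧ v = b›
      obtain ⟨a3, a4⟩ := ‹u = b ∧ v = a›
      have hxy : (a : ℕ) = (b : ℕ) := congrArg Fin.val (a1.symm.trans a3)
      omega
  all_goals
    ext ⟨a, b, c⟩ Q
    rw [Matrix.mul_assoc, Matrix.mul_assoc]
    simp only [LoneTwo_mul, LtwoTwo_mul, Lone_Two_apply, Ltwo_Two_apply]
    by_cases ha : (a : ℕ) < p <;> by_cases hb : (b : ℕ) < p <;> by_cases hc : (c : ℕ) < p <;>
      simp only [dd, ha, hb, hc, if_true, if_false] <;>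
      ring
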